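/- In the planted clique model with parameters n, k, Q (n ≥ 2, 1 ≤ k ≤ n), the probability that there exists a vertex u ∉ Q with deg(u) > (n−1)/2 + √(n·ln n) is at most 1/n. -/

import Mathlib

open MeasureTheory

namespace Stmt3

noncomputable section
open scoped Classical

variable {n : ℕ}

/-- Both endpoints of the unordered pair `p` lie in `Q`. -/
def BothInQ (Q : Finset (Fin n)) (p : Sym2 (Fin n)) : Prop := ∀ x ∈ p, x ∈ Q

/-- Index type: unordered pairs of distinct vertices not both lying in `Q`
(the "remaining pairs", whose edge-status is random). -/
def FreePair (n : ℕ) (Q : Finset (Fin n)) : Type :=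
  {p : Sym2 (Fin n) // ¬ p.IsDiag ∧ ¬ BothInQ Q p}

instance (n : ℕ) (Q : Finset (Fin n)) : Fintype (FreePair n Q) := by
  unfold FreePair; infer_instance

/-- Sample space of the planted clique model: one Boolean for each free pair. -/
def Ω (n : ℕ) (Q : Finset (Fin n)) : Type := FreePair n Q → Bool

instance (n : ℕ) (Q : Finset (Fin n)) : MeasurableSpace (Ω n Q) := MeasurableSpace.pi

/-- The Bernoulli(1/2) measure on `Bool`. -/
def bernoulliHalf : Measure Bool := (PMF.bernoulli (1 / 2) (by norm_num)).toMeasure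

instance : IsProbabilityMeasure bernoulliHalf := PMF.toMeasure.isProbabilityMeasure _

/-- The planted clique measure: each remaining pair is an edge independently w.p. 1/2. -/
def plantedClique (n : ℕ) (Q : Finset (Fin n)) : Measure (Ω n Q) :=
  Measure.pi fun _ => bernoulliHalf

/-- `u` and `v` are adjacent in the planted clique graph: they are distinct, and
either both lie in `Q` (a planted clique edge) or else the coin of the pair `{u,v}`
came up `true`. -/
def Adj (Q : Finset (Fin n)) (ω : Ω n Q) (u v : Fin n) : Prop :=
  ∃ hne : u ≠ v,
    BothInQ Q s(u, v) ∨
      ∃ h : ¬ BothInQ Q s(u, v),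
        ω ⟨s(u, v), ⟨fun hd => hne (Sym2.mk_isDiag_iff.mp hd), h⟩⟩ = true

/-- Degree of vertex `v` in the planted clique graph: its number of neighbors. -/
def deg (Q : Finset (Fin n)) (ω : Ω n Q) (v : Fin n) : ℕ :=
  (Finset.univ.filter fun u : Fin n => Adj Q ω u v).card

end

noncomputable section
open scoped Classical
open Finset ENNReal

instance instFintypeOmega (n : ℕ) (Q : Finset (Fin n)) : Fintype (Ω n Q) := by
  unfold Ω; infer_instance

instance (n : ℕ) (Q : Finset (Fin n)) : MeasurableSingletonClass (Ω n Q) := by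
  constructor
  intro ω
  have : ({ω} : Set (Ω n Q)) = Set.pi Set.univ (fun i => {ω i}) :=
    (Set.univ_pi_singleton ω).symm
  rw [this]
  exact MeasurableSet.univ_pi fun i => measurableSet_singleton _

lemma countable_omega (n : ℕ) (Q : Finset (Fin n)) : Countable (Ω n Q) := by
  unfold Ω; infer_instance

/-- the set of free pairs containing `u` -/
def Au (n : ℕ) (Q : Finset (Fin n)) (u : Fin n) : Finset (FreePair n Q) :=
  Finset.univ.filter fun i : FreePair n Q => u ∈ i.1

lemma meas_singleton {n : ℕ} (Q : Finset (Fin n)) (ω : Ω n Q) :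
    plantedClique n Q {ω} = ∏ _i : FreePair n Q, (2⁻¹ : ℝ≥0∞) := by
  have h : ({ω} : Set (Ω n Q)) = Set.pi Set.univ (fun i => {ω i}) :=
    (Set.univ_pi_singleton ω).symm
  have key := Measure.pi_pi (fun _ : FreePair n Q => bernoulliHalf) (fun i => {ω i})
  rw [plantedClique, h]
  refine key.trans (Finset.prod_congr rfl fun i _ => ?_)
  rw [bernoulliHalf, PMF.toMeasure_apply_singleton _ _ (measurableSet_singleton _),
    PMF.bernoulli_apply]
  cases ω i <;> simp

lemma deg_le {n : ℕ} (Q : Finset (Fin n)) (u : Fin n) (hu : u ∉ Q) (ω : Ω n Q) :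
    deg Q ω u ≤ ((Au n Q u).filter fun i => ω i = true).card := by
  rw [deg, ← Finset.card_attach]
  have key : ∀ x : {v // v ∈ Finset.univ.filter fun v : Fin n => Adj Q ω v u},
      ¬ (s(x.1, u) : Sym2 (Fin n)).IsDiag ∧ ¬ BothInQ Q s(x.1, u) := by
    rintro ⟨v, hv⟩
    simp only [Finset.mem_filter] at hv
    obtain ⟨hne, _⟩ := hv.2
    exact ⟨fun hd => hne (Sym2.mk_isDiag_iff.mp hd),
      fun hB => hu (hB u (by simp))⟩
  apply Finset.card_le_card_of_injOn (fun x => (⟨s(x.1, u), key x⟩ : FreePair n Q))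
  · rintro ⟨v, hv⟩ -
    simp only [Finset.mem_filter] at hv
    obtain ⟨hne, hadj⟩ := hv.2
    refine Finset.mem_filter.mpr ⟨Finset.mem_filter.mpr ⟨Finset.mem_univ _, by simp⟩, ?_⟩
    rcases hadj with hB | ⟨hnB, hω⟩
    · exact absurd (hB u (by simp)) hu
    · exact hω
  · rintro ⟨v, hv⟩ - ⟨v', hv'⟩ - h
    simp only [Finset.mem_coe, Finset.mem_attach] at *
    simp only [Subtype.mk.injEq, Sym2.eq_iff] at h
    apply Subtype.ext
    simp only [Finset.mem_filter] at hv hv'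
    rcases h with ⟨h1, -⟩ | ⟨h1, h2⟩
    · exact h1
    · exact absurd h1 hv.2.1

lemma card_Au_le {n : ℕ} (Q : Finset (Fin n)) (u : Fin n) (hn : 1 ≤ n) :
    (Au n Q u).card ≤ n - 1 := by
  have h1 : (n : ℕ) - 1 = ((Finset.univ : Finset (Fin n)).erase u).card := by
    rw [Finset.card_erase_of_mem (Finset.mem_univ u), Finset.card_univ, Fintype.card_fin]
  rw [h1, ← Finset.card_attach (s := Au n Q u)]
  have hm : ∀ x : {i // i ∈ Au n Q u}, u ∈ x.1.1 := by
    rintro ⟨i, hi⟩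
    simpa [Au] using hi
  apply Finset.card_le_card_of_injOn (fun x => Sym2.Mem.other' (hm x))
  · rintro x -
    refine Finset.mem_erase.mpr ⟨?_, Finset.mem_univ _⟩
    have hd := x.1.2.1
    show Sym2.Mem.other' (hm x) ≠ u
    rw [← Sym2.other_eq_other']
    exact Sym2.other_ne hd (hm x)
  · rintro ⟨i, hi⟩ - ⟨j, hj⟩ - h
    simp only at h
    apply Subtype.ext; apply Subtype.ext
    have hi2 := Sym2.other_spec' (hm ⟨i, hi⟩)
    have hj2 := Sym2.other_spec' (hm ⟨j, hj⟩)
    rw [← hi2, ← hj2, h]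

lemma lintegral_mgf {n : ℕ} (Q : Finset (Fin n)) (u : Fin n) (c : ℝ≥0∞) :
    ∫⁻ ω, c ^ (((Au n Q u).filter fun i => ω i = true).card) ∂ plantedClique n Q
      = ((c + 1) * 2⁻¹) ^ (Au n Q u).card := by
  have h1 : ∀ ω : Ω n Q, (c ^ (((Au n Q u).filter fun i => ω i = true).card))
        * plantedClique n Q {ω}
      = ∏ i : FreePair n Q, ((if i ∈ Au n Q u ∧ ω i = true then c else 1) * 2⁻¹) := by
    intro ω
    rw [meas_singleton, Finset.prod_mul_distrib]
    congr 1
    rw [← Finset.prod_const,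
      show ((Au n Q u).filter fun i => ω i = true)
          = Finset.univ.filter (fun i => i ∈ Au n Q u ∧ ω i = true) by
        ext i; simp [Finset.mem_filter],
      Finset.prod_filter]
    congr!
  rw [lintegral_fintype]
  simp_rw [h1]
  have key := Fintype.prod_sum (fun (i : FreePair n Q) (b : Bool) =>
    (if i ∈ Au n Q u ∧ b = true then c else 1) * 2⁻¹)
  refine (key.symm.trans ?_ :)
  have h2 : ∀ i : FreePair n Q,
      (∑ b : Bool, (if i ∈ Au n Q u ∧ b = true then c else 1) * 2⁻¹)
      = if i ∈ Au n Q u then (c + 1) * 2⁻¹ else 1 := by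
    intro i
    rw [Fintype.sum_bool]
    by_cases h : i ∈ Au n Q u <;> simp [h]
    · rw [add_mul, one_mul]
    · exact ENNReal.inv_two_add_inv_two
  simp_rw [h2]
  rw [Fintype.prod_ite_mem, Finset.prod_const]

lemma markov {n : ℕ} (Q : Finset (Fin n)) (L : ℝ≥0∞) (hL0 : L ≠ 0) (hLtop : L ≠ ∞)
    (g : Ω n Q → ℝ≥0∞) (E : Set (Ω n Q)) (hE : ∀ ω ∈ E, L ≤ g ω) :
    plantedClique n Q E ≤ L⁻¹ * ∫⁻ ω, g ω ∂ plantedClique n Q := by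
  have hmeas : Measurable g := measurable_of_countable g
  have h1 : plantedClique n Q E ≤ plantedClique n Q {ω | L ≤ g ω} := measure_mono hE
  have h2 := mul_meas_ge_le_lintegral₀ (μ := plantedClique n Q) hmeas.aemeasurable L
  calc plantedClique n Q E = L⁻¹ * (L * plantedClique n Q E) := by
        rw [← mul_assoc, ENNReal.inv_mul_cancel hL0 hLtop, one_mul]
    _ ≤ L⁻¹ * ∫⁻ ω, g ω ∂ plantedClique n Q := by
        gcongr
        exact le_trans (mul_le_mul_right h1 L) h2

open Real in
lemma chernoff_real (n : ℕ) (hn : 2 ≤ n) :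
    (Real.exp ((4 * Real.sqrt (n * Real.log n) / ((n:ℝ) - 1)) *
        (((n:ℝ) - 1) / 2 + Real.sqrt (n * Real.log n))))⁻¹ *
      ((Real.exp (4 * Real.sqrt (n * Real.log n) / ((n:ℝ) - 1)) + 1) / 2) ^ (n - 1) ≤
    1 / (n:ℝ) ^ 2 := by
  have hn1 : (1:ℝ) < n := by exact_mod_cast hn.trans_lt' one_lt_two
  have hN : (0:ℝ) < (n:ℝ) - 1 := by linarith
  have hlog : 0 < Real.log n := Real.log_pos hn1
  have htpos : 0 < Real.sqrt (n * Real.log n) :=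
    Real.sqrt_pos.mpr (by positivity)
  set t := Real.sqrt (n * Real.log n) with ht
  set N : ℝ := (n:ℝ) - 1 with hNdef
  set s : ℝ := 4 * t / N with hs
  have hspos : 0 < s := by positivity
  have hcast : ((n - 1 : ℕ) : ℝ) = N := by
    have : (1:ℕ) ≤ n := by omega
    push_cast [this]; ring
  have step1 : (Real.exp s + 1) / 2 ≤ Real.exp (s / 2 + s ^ 2 / 8) := by
    have hcosh : Real.cosh (s/2) ≤ Real.exp ((s/2)^2/2) := Real.cosh_le_exp_half_sq _
    have hid : (Real.exp s + 1) / 2 = Real.exp (s/2) * Real.cosh (s/2) := by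
      rw [Real.cosh_eq]
      rw [show Real.exp (s/2) * ((Real.exp (s/2) + Real.exp (-(s/2)))/2)
          = (Real.exp (s/2) * Real.exp (s/2) + Real.exp (s/2) * Real.exp (-(s/2)))/2 by ring,
        ← Real.exp_add, ← Real.exp_add]
      norm_num
    rw [hid, Real.exp_add]
    have := Real.exp_pos (s/2)
    have h2 : Real.exp ((s/2)^2/2) = Real.exp (s^2/8) := by ring_nf
    rw [← h2]
    nlinarith [Real.cosh_pos (s/2)]
  have hpow : ((Real.exp s + 1) / 2) ^ (n-1) ≤ Real.exp (N * (s/2 + s^2/8)) := by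
    calc ((Real.exp s + 1) / 2) ^ (n-1) ≤ (Real.exp (s/2 + s^2/8)) ^ (n-1) := by
          apply pow_le_pow_left₀ (by positivity) step1
      _ = Real.exp (N * (s/2 + s^2/8)) := by
          rw [← Real.exp_nat_mul, hcast]
  have hts : t ^ 2 = n * Real.log n := Real.sq_sqrt (by positivity)
  have hexpo : N * (s/2 + s^2/8) - s * (N/2 + t) = -(2 * t^2 / N) := by
    rw [hs]
    field_simp
    ring
  have hfin : Real.exp (-(2 * t^2/N)) ≤ 1 / (n:ℝ)^2 := by
    have h1 : 2 * Real.log n ≤ 2 * t^2 / N := by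
      rw [hts, le_div_iff₀ hN]
      nlinarith
    have h2 : Real.exp (-(2*t^2/N)) ≤ Real.exp (-(2 * Real.log n)) :=
      Real.exp_le_exp.mpr (by linarith)
    refine h2.trans ?_
    have : Real.exp (-(2 * Real.log n)) = 1 / (n:ℝ)^2 := by
      rw [Real.exp_neg, show (2:ℝ) * Real.log n = Real.log n + Real.log n by ring,
        Real.exp_add, Real.exp_log (by linarith)]
      field_simp
    rw [this]
  calc (Real.exp (s * (N/2 + t)))⁻¹ * ((Real.exp s + 1)/2) ^ (n-1)
      ≤ (Real.exp (s * (N/2 + t)))⁻¹ * Real.exp (N * (s/2 + s^2/8)) := by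
        apply mul_le_mul_of_nonneg_left hpow (by positivity)
    _ = Real.exp (N * (s/2 + s^2/8) - s * (N/2 + t)) := by
        rw [Real.exp_sub]; exact (div_eq_inv_mul _ _).symm
    _ ≤ 1 / (n:ℝ)^2 := by rw [hexpo]; exact hfin

theorem nonclique_vertex_degree_upper (n k : ℕ) (hn : 2 ≤ n) (hk1 : 1 ≤ k) (hkn : k ≤ n)
    (Q : Finset (Fin n)) (hQ : Q.card = k) :
    plantedClique n Q {ω : Ω n Q | ∃ u ∉ Q,
        ((n : ℝ) - 1) / 2 + Real.sqrt (n * Real.log n) < (deg Q ω u : ℝ)} ≤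
      ENNReal.ofReal (1 / n) := by
  classical
  have hn1 : (1:ℝ) < n := by exact_mod_cast hn.trans_lt' one_lt_two
  have hN : (0:ℝ) < (n:ℝ) - 1 := by linarith
  have hlog : 0 < Real.log n := Real.log_pos hn1
  have htpos : 0 < Real.sqrt (n * Real.log n) := Real.sqrt_pos.mpr (by positivity)
  set t := Real.sqrt (n * Real.log n) with htdef
  set s : ℝ := 4 * t / ((n:ℝ) - 1) with hsdef
  set a' : ℝ := ((n:ℝ) - 1) / 2 + t with hadef
  have hspos : 0 < s := by positivity
  -- per-vertex bound
  have hvert : ∀ u : Fin n, u ∉ Q →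
      plantedClique n Q {ω : Ω n Q | a' < (deg Q ω u : ℝ)} ≤
        ENNReal.ofReal (1 / (n:ℝ)^2) := by
    intro u hu
    set L : ℝ≥0∞ := ENNReal.ofReal (Real.exp (s * a')) with hLdef
    have hL0 : L ≠ 0 := ne_of_gt (ENNReal.ofReal_pos.mpr (Real.exp_pos _))
    have hLtop : L ≠ ∞ := ENNReal.ofReal_ne_top
    have hsub : ∀ ω ∈ {ω : Ω n Q | a' < (deg Q ω u : ℝ)},
        L ≤ ENNReal.ofReal (Real.exp s)
            ^ (((Au n Q u).filter fun i => ω i = true).card) := by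
      intro ω hω
      have hd := deg_le Q u hu ω
      set m := ((Au n Q u).filter fun i => ω i = true).card with hm
      have hr : Real.exp (s * a') ≤ Real.exp s ^ m := by
        rw [← Real.exp_nat_mul]
        apply Real.exp_le_exp.mpr
        have ham : a' ≤ (m:ℝ) := by
          refine le_trans (le_of_lt hω) ?_
          exact_mod_cast Nat.cast_le.mpr hd
        nlinarith
      calc L ≤ ENNReal.ofReal (Real.exp s ^ m) := ENNReal.ofReal_le_ofReal hr
        _ = ENNReal.ofReal (Real.exp s) ^ m := ENNReal.ofReal_pow (Real.exp_pos s).le m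
    have hmar := markov Q L hL0 hLtop _ _ hsub
    rw [lintegral_mgf] at hmar
    refine hmar.trans ?_
    have hbase : ((ENNReal.ofReal (Real.exp s) + 1) * 2⁻¹)
        = ENNReal.ofReal ((Real.exp s + 1) / 2) := by
      rw [ENNReal.ofReal_div_of_pos two_pos,
        ENNReal.ofReal_add (Real.exp_pos s).le zero_le_one, ENNReal.ofReal_one,
        div_eq_mul_inv, ENNReal.ofReal_ofNat]
    rw [hbase]
    have hone : (1:ℝ≥0∞) ≤ ENNReal.ofReal ((Real.exp s + 1) / 2) := by
      rw [← ENNReal.ofReal_one]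
      apply ENNReal.ofReal_le_ofReal
      nlinarith [Real.one_le_exp hspos.le]
    have hpowle : ENNReal.ofReal ((Real.exp s + 1) / 2) ^ (Au n Q u).card
        ≤ ENNReal.ofReal ((Real.exp s + 1) / 2) ^ (n - 1) :=
      pow_le_pow_right₀ hone (card_Au_le Q u (by omega))
    calc L⁻¹ * ENNReal.ofReal ((Real.exp s + 1) / 2) ^ (Au n Q u).card
        ≤ L⁻¹ * ENNReal.ofReal ((Real.exp s + 1) / 2) ^ (n - 1) := by gcongr
      _ = ENNReal.ofReal ((Real.exp (s * a'))⁻¹ * ((Real.exp s + 1) / 2) ^ (n - 1)) := by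
          rw [hLdef, ← ENNReal.ofReal_inv_of_pos (Real.exp_pos _),
            ← ENNReal.ofReal_pow (by positivity), ← ENNReal.ofReal_mul (by positivity)]
      _ ≤ ENNReal.ofReal (1 / (n:ℝ)^2) := by
          apply ENNReal.ofReal_le_ofReal
          exact chernoff_real n hn
  -- union bound
  have hsubset : {ω : Ω n Q | ∃ u ∉ Q, a' < (deg Q ω u : ℝ)} ⊆
      ⋃ u ∈ (Qᶜ : Finset (Fin n)), {ω : Ω n Q | a' < (deg Q ω u : ℝ)} := by
    intro ω hω
    obtain ⟨u, hu, h⟩ := hω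
    exact Set.mem_biUnion (Finset.mem_compl.mpr hu) h
  calc plantedClique n Q {ω : Ω n Q | ∃ u ∉ Q, a' < (deg Q ω u : ℝ)}
      ≤ plantedClique n Q (⋃ u ∈ (Qᶜ : Finset (Fin n)),
          {ω : Ω n Q | a' < (deg Q ω u : ℝ)}) := measure_mono hsubset
    _ ≤ ∑ u ∈ (Qᶜ : Finset (Fin n)),
          plantedClique n Q {ω : Ω n Q | a' < (deg Q ω u : ℝ)} :=
        measure_biUnion_finset_le _ _
    _ ≤ ∑ u ∈ (Qᶜ : Finset (Fin n)), ENNReal.ofReal (1 / (n:ℝ)^2) :=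
        Finset.sum_le_sum fun u hu => hvert u (by simpa using hu)
    _ = ((Qᶜ : Finset (Fin n)).card : ℝ≥0∞) * ENNReal.ofReal (1 / (n:ℝ)^2) := by
        rw [Finset.sum_const, nsmul_eq_mul]
    _ ≤ (n : ℝ≥0∞) * ENNReal.ofReal (1 / (n:ℝ)^2) := by
        gcongr
        exact_mod_cast (Finset.card_le_univ _).trans_eq (by simp)
    _ = ENNReal.ofReal (1 / n) := by
        rw [← ENNReal.ofReal_natCast n, ← ENNReal.ofReal_mul (by positivity)]
        congr 1
        field_simp

end
end Stmt3
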